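/- Let q_3 be the unique root in (1,2) of x^5 - x^4 - x^3 - x + 1 = 0. Then for every k ≥ 0, the sequence 1 (1 0 0 0)^k 0 1 (1 0)^∞ is a q_3-expansion of 1; that is, Σ over this 0-1 sequence of δ_i q_3^{-i} equals 1. Also 1 (1 0 0 0)^∞ is a q_3-expansion of 1. -/

import Mathlib

/-- The 0-1 sequence `1 (1000)^k 0 1 (10)^∞` (0-indexed). -/
def seqA (k : ℕ) (i : ℕ) : ℕ :=
  if i = 0 then 1
  else if i ≤ 4 * k then (if (i - 1) % 4 = 0 then 1 else 0)
  else if i = 4 * k + 1 then 0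
  else if i = 4 * k + 2 then 1
  else if (i - (4 * k + 3)) % 2 = 0 then 1 else 0

/-- The 0-1 sequence `1 (1000)^∞` (0-indexed). -/
def seqB (i : ℕ) : ℕ :=
  if i = 0 then 1 else if (i - 1) % 4 = 0 then 1 else 0

private lemma summ_aux {r : ℝ} (h0 : 0 ≤ r) (h1 : r < 1) (a : ℕ → ℕ) (ha : ∀ i, a i ≤ 1) :
    Summable (fun i => (a i : ℝ) * r ^ (i + 1)) := by
  refine Summable.of_nonneg_of_le (fun i => by positivity) (fun i => ?_)
    (summable_geometric_of_lt_one h0 h1)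
  calc (a i : ℝ) * r ^ (i + 1) ≤ 1 * r ^ (i + 1) := by
        gcongr
        exact_mod_cast ha i
    _ = r * r ^ i := by ring
    _ ≤ 1 * r ^ i := mul_le_mul_of_nonneg_right h1.le (by positivity)
    _ = r ^ i := one_mul _

/-- geometric sum over multiples of `n` -/
private lemma tsum_stride {r c : ℝ} (h0 : 0 ≤ r) (h1 : r < 1) (n : ℕ) (hn : 0 < n) :
    ∑' i : ℕ, (if i % n = 0 then c * r ^ i else 0) = c * (1 - r ^ n)⁻¹ := by
  have hinj : Function.Injective (fun m : ℕ => n * m) := fun a b h => by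
    simp only at h; exact Nat.eq_of_mul_eq_mul_left hn h
  rw [← hinj.tsum_eq ?_]
  · have he : ∀ m : ℕ, (if (n * m) % n = 0 then c * r ^ (n * m) else 0) = c * (r ^ n) ^ m := by
      intro m
      rw [if_pos (Nat.mul_mod_right n m), ← pow_mul]
    simp only [he]
    rw [tsum_mul_left, tsum_geometric_of_lt_one (by positivity)
      (pow_lt_one₀ h0 h1 hn.ne')]
  · intro x hx
    simp only [Function.mem_support] at hx
    have hxm : x % n = 0 := by
      by_contra h
      simp [h] at hx
    exact ⟨x / n, Nat.mul_div_cancel' (Nat.dvd_of_mod_eq_zero hxm)⟩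

set_option maxHeartbeats 1000000 in
private lemma tsum_seqA {r : ℝ} (h0 : 0 < r) (h1 : r < 1)
    (hkey : r + r ^ 2 + r ^ 4 - r ^ 5 = 1) (k : ℕ) :
    ∑' i : ℕ, (seqA k i : ℝ) * r ^ (i + 1) = 1 := by
  have hle : ∀ k i, seqA k i ≤ 1 := by
    intro k i; unfold seqA; split_ifs <;> first | omega | exact ‹False›.elim
  have hs : ∀ k, Summable (fun i => (seqA k i : ℝ) * r ^ (i + 1)) := fun k =>
    summ_aux h0.le h1 _ (hle k)
  induction k with
  | zero =>
    rw [← (hs 0).sum_add_tsum_nat_add 3]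
    have h3 : ∀ i : ℕ, ((seqA 0 (i + 3) : ℝ) * r ^ (i + 3 + 1))
        = if i % 2 = 0 then (r ^ 4) * r ^ i else 0 := by
      intro i
      have h : seqA 0 (i + 3) = if i % 2 = 0 then 1 else 0 := by
        unfold seqA; split_ifs <;> first | omega | exact ‹False›.elim
      rw [h]
      split_ifs <;> push_cast <;> ring
    simp only [h3]
    rw [tsum_stride h0.le h1 2 (by norm_num)]
    have h2 : (1 : ℝ) - r ^ 2 ≠ 0 := by nlinarith
    have htail : r ^ 4 * (1 - r ^ 2)⁻¹ = 1 - r - r ^ 3 := by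
      rw [mul_inv_eq_iff_eq_mul₀ h2]
      linear_combination hkey
    rw [htail]
    have e0 : seqA 0 0 = 1 := by decide
    have e1 : seqA 0 1 = 0 := by decide
    have e2 : seqA 0 2 = 1 := by decide
    rw [Finset.sum_range_succ, Finset.sum_range_succ, Finset.sum_range_one, e0, e1, e2]
    push_cast
    ring
  | succ k ih =>
    rw [← (hs (k + 1)).sum_add_tsum_nat_add 5]
    have h5 : ∀ i : ℕ, ((seqA (k + 1) (i + 5) : ℝ) * r ^ (i + 5 + 1))
        = r ^ 4 * ((seqA k (i + 1) : ℝ) * r ^ (i + 1 + 1)) := by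
      intro i
      have h : seqA (k + 1) (i + 5) = seqA k (i + 1) := by
        unfold seqA; split_ifs <;> first | omega | exact ‹False›.elim
      rw [h]; ring
    simp only [h5]
    rw [tsum_mul_left]
    have htail : ∑' i : ℕ, ((seqA k (i + 1) : ℝ) * r ^ (i + 1 + 1)) = 1 - r := by
      have ht := (hs k).tsum_eq_zero_add
      rw [ih] at ht
      have e0 : seqA k 0 = 1 := by unfold seqA; simp
      rw [e0] at ht
      push_cast at ht
      linarith [ht]
    rw [htail]
    have e0 : seqA (k + 1) 0 = 1 := by unfold seqA; simp
    have e1 : seqA (k + 1) 1 = 1 := by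
      unfold seqA; split_ifs <;> first | omega | exact ‹False›.elim
    have e2 : seqA (k + 1) 2 = 0 := by
      unfold seqA; split_ifs <;> first | omega | exact ‹False›.elim
    have e3 : seqA (k + 1) 3 = 0 := by
      unfold seqA; split_ifs <;> first | omega | exact ‹False›.elim
    have e4 : seqA (k + 1) 4 = 0 := by
      unfold seqA; split_ifs <;> first | omega | exact ‹False›.elim
    rw [Finset.sum_range_succ, Finset.sum_range_succ, Finset.sum_range_succ,
      Finset.sum_range_succ, Finset.sum_range_one, e0, e1, e2, e3, e4]
    push_cast
    linarith [hkey]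

private lemma tsum_seqB {r : ℝ} (h0 : 0 < r) (h1 : r < 1)
    (hkey : r + r ^ 2 + r ^ 4 - r ^ 5 = 1) :
    ∑' i : ℕ, (seqB i : ℝ) * r ^ (i + 1) = 1 := by
  have hs : Summable (fun i => (seqB i : ℝ) * r ^ (i + 1)) :=
    summ_aux h0.le h1 _ (fun i => by unfold seqB; split_ifs <;> first | omega | exact ‹False›.elim)
  rw [hs.tsum_eq_zero_add]
  have h1' : ∀ i : ℕ, ((seqB (i + 1) : ℝ) * r ^ (i + 1 + 1))
      = if i % 4 = 0 then (r ^ 2) * r ^ i else 0 := by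
    intro i
    have h : seqB (i + 1) = if i % 4 = 0 then 1 else 0 := by
      unfold seqB; split_ifs <;> first | omega | exact ‹False›.elim
    rw [h]
    split_ifs <;> push_cast <;> ring
  simp only [h1']
  rw [tsum_stride h0.le h1 4 (by norm_num)]
  have h4 : (1 : ℝ) - r ^ 4 ≠ 0 := by nlinarith
  have htail : r ^ 2 * (1 - r ^ 4)⁻¹ = 1 - r := by
    rw [mul_inv_eq_iff_eq_mul₀ h4]
    linear_combination hkey
  rw [htail]
  have e0 : seqB 0 = 1 := by decide
  rw [e0]
  push_cast
  ring

/-- each 1(1000)^k 01(10)^∞ and 1(1000)^∞ is a q₃-expansion of 1. -/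
theorem q3_expansions_of_one (q3 : ℝ)
    (hq3 : q3 ∈ Set.Ioo (1:ℝ) 2 ∧ q3^5 - q3^4 - q3^3 - q3 + 1 = 0)
    (hq3u : ∀ q : ℝ, q ∈ Set.Ioo (1:ℝ) 2 → q^5 - q^4 - q^3 - q + 1 = 0 → q = q3) :
    (∀ k : ℕ, ∑' i : ℕ, (seqA k i : ℝ) / q3 ^ (i + 1) = 1) ∧
    ∑' i : ℕ, (seqB i : ℝ) / q3 ^ (i + 1) = 1 := by
  obtain ⟨⟨hq1, hq2⟩, hpoly⟩ := hq3
  have hq0 : (0 : ℝ) < q3 := by linarith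
  have hq0' : q3 ≠ 0 := ne_of_gt hq0
  have hr0 : 0 < q3⁻¹ := by positivity
  have hr1 : q3⁻¹ < 1 := inv_lt_one_of_one_lt₀ hq1
  have hkey : q3⁻¹ + (q3⁻¹) ^ 2 + (q3⁻¹) ^ 4 - (q3⁻¹) ^ 5 = 1 := by
    field_simp
    linear_combination (-1) * hpoly
  constructor
  · intro k
    rw [← tsum_seqA hr0 hr1 hkey k]
    congr 1; funext i
    rw [div_eq_mul_inv, inv_pow]
  · rw [← tsum_seqB hr0 hr1 hkey]
    congr 1; funext i
    rw [div_eq_mul_inv, inv_pow]
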